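/- Let L₁ ⊆ Σ^{ℓ₁} and L₂ ⊆ Σ^{ℓ₂} be nonempty block languages over an alphabet of size k. Then dsc(L₁L₂) = dsc(L₁) + dsc(L₂) − 2, where L₁L₂ = {uv : u ∈ L₁, v ∈ L₂}. -/

import Mathlib

/-- Deterministic state complexity: the minimal number of states of a complete DFA
accepting `L`. -/
noncomputable def dsc {α : Type} (L : Set (List α)) : ℕ :=
  sInf {n | ∃ M : DFA α (Fin n), M.accepts = L}

/-- Concatenation of two languages. -/
def concatLang {α : Type*} (L₁ L₂ : Set (List α)) : Set (List α) :=
  {w | ∃ u ∈ L₁, ∃ v ∈ L₂, w = u ++ v}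

namespace Stmt16

variable {α : Type}

def lquot (L : Set (List α)) (w : List α) : Set (List α) := {v | w ++ v ∈ L}

@[simp] lemma mem_lquot {L : Set (List α)} {w v : List α} : v ∈ lquot L w ↔ w ++ v ∈ L :=
  Iff.rfl

@[simp] lemma lquot_nil (L : Set (List α)) : lquot L [] = L := rfl

lemma lquot_append (L : Set (List α)) (w x : List α) :
    lquot L (w ++ x) = lquot (lquot L w) x := by
  ext v; simp [lquot, List.append_assoc]

def Quots (L : Set (List α)) : Set (Set (List α)) := Set.range (lquot L)

lemma quots_finite [Fintype α] {L : Set (List α)} {ℓ : ℕ} (hL : ∀ w ∈ L, w.length = ℓ) :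
    (Quots L).Finite := by
  have hfin : ({v : List α | v.length ≤ ℓ}).Finite := List.finite_length_le α ℓ
  refine hfin.finite_subsets.subset ?_
  rintro _ ⟨w, rfl⟩ v hv
  have := hL _ hv
  simp only [List.length_append] at this
  simp only [Set.mem_setOf_eq]; omega

lemma eval_lquot {L : Set (List α)} {n : ℕ} (M : DFA α (Fin n)) (hM : M.accepts = L)
    {w w' : List α} (h : M.eval w = M.eval w') : lquot L w = lquot L w' := by
  ext v
  simp only [mem_lquot]
  subst hM
  show M.evalFrom M.start (w ++ v) ∈ M.accept ↔ M.evalFrom M.start (w' ++ v) ∈ M.accept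
  simp only [DFA.eval] at h
  rw [DFA.evalFrom_of_append, DFA.evalFrom_of_append, h]

lemma card_quots_le {L : Set (List α)} {n : ℕ} (M : DFA α (Fin n)) (hM : M.accepts = L) :
    Nat.card (Quots L) ≤ n := by
  have : ∃ f : Quots L → Fin n, Function.Injective f := by
    refine ⟨fun S => M.eval S.2.choose, fun S S' h => ?_⟩
    have h1 : lquot L S.2.choose = S.1 := S.2.choose_spec
    have h2 : lquot L S'.2.choose = S'.1 := S'.2.choose_spec
    have := eval_lquot M hM h
    exact Subtype.ext (by rw [← h1, ← h2, this])
  obtain ⟨f, hf⟩ := this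
  simpa using Nat.card_le_card_of_injective f hf

/-- the quotient automaton -/
noncomputable def quotDFA (L : Set (List α)) : DFA α (Quots L) where
  step := fun S a => ⟨{v | a :: v ∈ S.1}, by
    obtain ⟨w, hw⟩ := S.2
    exact ⟨w ++ [a], by rw [← hw]; ext v; simp [lquot, List.append_assoc]⟩⟩
  start := ⟨L, ⟨[], rfl⟩⟩
  accept := {S | [] ∈ S.1}

lemma quotDFA_evalFrom (L : Set (List α)) (w : List α) (S : Quots L) :
    ((quotDFA L).evalFrom S w).1 = lquot S.1 w := by
  induction w generalizing S with
  | nil => simp [DFA.evalFrom]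
  | cons a w ih =>
    show ((quotDFA L).evalFrom ((quotDFA L).step S a) w).1 = _
    rw [ih]
    ext v; simp [quotDFA, lquot]

lemma quotDFA_accepts (L : Set (List α)) : (quotDFA L).accepts = L := by
  ext w
  have h : ((quotDFA L).evalFrom (quotDFA L).start w).1 = lquot L w :=
    quotDFA_evalFrom L w (quotDFA L).start
  rw [DFA.mem_accepts]
  constructor
  · intro hw
    have h2 : [] ∈ ((quotDFA L).evalFrom (quotDFA L).start w).1 := hw
    rw [h] at h2
    have h3 : w ∈ L := by simpa using h2
    exact h3
  · intro hw
    show [] ∈ ((quotDFA L).evalFrom (quotDFA L).start w).1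
    rw [h]; simpa

def reindex {σ τ : Type} (M : DFA α σ) (e : σ ≃ τ) : DFA α τ where
  step := fun t a => e (M.step (e.symm t) a)
  start := e M.start
  accept := e.symm ⁻¹' M.accept

lemma reindex_evalFrom {σ τ : Type} (M : DFA α σ) (e : σ ≃ τ) (s : σ) (w : List α) :
    (reindex M e).evalFrom (e s) w = e (M.evalFrom s w) := by
  induction w generalizing s with
  | nil => rfl
  | cons a w ih =>
    show (reindex M e).evalFrom ((reindex M e).step (e s) a) w = _
    simp only [reindex, Equiv.symm_apply_apply]
    exact ih (M.step s a)

lemma reindex_accepts {σ τ : Type} (M : DFA α σ) (e : σ ≃ τ) :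
    (reindex M e).accepts = M.accepts := by
  ext w
  rw [DFA.mem_accepts, DFA.mem_accepts]
  show (reindex M e).evalFrom (e M.start) w ∈ _ ↔ _
  rw [reindex_evalFrom]
  simp [reindex, DFA.mem_accepts, DFA.eval]

lemma dsc_eq_card [Fintype α] {L : Set (List α)} {ℓ : ℕ} (hL : ∀ w ∈ L, w.length = ℓ) :
    dsc L = (Quots L).ncard := by
  rw [← Nat.card_coe_set_eq]
  have hfin : (Quots L).Finite := quots_finite hL
  have : Finite (Quots L) := hfin.to_subtype
  have hmem : Nat.card (Quots L) ∈ {n | ∃ M : DFA α (Fin n), M.accepts = L} := by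
    refine ⟨reindex (quotDFA L) (Finite.equivFin _), ?_⟩
    rw [reindex_accepts, quotDFA_accepts]
  refine le_antisymm (Nat.sInf_le hmem) (le_csInf ⟨_, hmem⟩ ?_)
  rintro n ⟨M, hM⟩
  exact card_quots_le M hM


section Comb

variable {L₁ L₂ : Set (List α)} {ℓ₁ ℓ₂ : ℕ}

lemma mem_concatLang {w : List α} :
    w ∈ concatLang L₁ L₂ ↔ ∃ u ∈ L₁, ∃ v ∈ L₂, w = u ++ v := Iff.rfl

lemma concat_length (hL₁ : ∀ w ∈ L₁, w.length = ℓ₁) (hL₂ : ∀ w ∈ L₂, w.length = ℓ₂) :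
    ∀ w ∈ concatLang L₁ L₂, w.length = ℓ₁ + ℓ₂ := by
  rintro w ⟨u, hu, v, hv, rfl⟩
  simp [hL₁ u hu, hL₂ v hv]

lemma empty_mem_quots [Nonempty α] {L : Set (List α)} {ℓ : ℕ}
    (hL : ∀ w ∈ L, w.length = ℓ) : (∅ : Set (List α)) ∈ Quots L := by
  refine ⟨List.replicate (ℓ + 1) (Classical.arbitrary α), ?_⟩
  ext v
  simp only [mem_lquot, Set.mem_empty_iff_false, iff_false]
  intro h
  have := hL _ h
  simp only [List.length_append, List.length_replicate] at this
  omega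

@[simp] lemma concat_empty_left : concatLang (∅ : Set (List α)) L₂ = ∅ := by
  ext w; simp [concatLang]

@[simp] lemma concat_singleton_nil : concatLang ({[]} : Set (List α)) L₂ = L₂ := by
  ext w; simp [concatLang]

@[simp] lemma lquot_empty (x : List α) : lquot (∅ : Set (List α)) x = ∅ := rfl

lemma lquot_of_mem (hL₁ : ∀ w ∈ L₁, w.length = ℓ₁) {u : List α} (hu : u ∈ L₁) :
    lquot L₁ u = {[]} := by
  ext v
  simp only [mem_lquot, Set.mem_singleton_iff]
  constructor
  · intro h
    have h1 := hL₁ _ h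
    have h2 := hL₁ _ hu
    simp only [List.length_append] at h1
    exact List.eq_nil_of_length_eq_zero (by omega)
  · rintro rfl; simpa using hu

lemma lquot_of_not_mem (hL₁ : ∀ w ∈ L₁, w.length = ℓ₁) {u : List α}
    (hlen : u.length = ℓ₁) (hu : u ∉ L₁) : lquot L₁ u = ∅ := by
  ext v
  simp only [mem_lquot, Set.mem_empty_iff_false, iff_false]
  intro h
  have h1 := hL₁ _ h
  simp only [List.length_append] at h1
  have : v = [] := List.eq_nil_of_length_eq_zero (by omega)
  subst this
  simp only [List.append_nil] at h
  exact hu h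

lemma lquot_concat_of_le (hL₁ : ∀ w ∈ L₁, w.length = ℓ₁) {w : List α}
    (hw : w.length ≤ ℓ₁) :
    lquot (concatLang L₁ L₂) w = concatLang (lquot L₁ w) L₂ := by
  ext v
  simp only [mem_lquot, mem_concatLang]
  constructor
  · rintro ⟨u, hu, x, hx, hvux⟩
    rcases List.append_eq_append_iff.1 hvux with ⟨m, hm1, hm2⟩ | ⟨c, hc1, hc2⟩
    · exact ⟨m, by rw [← hm1]; exact hu, x, hx, hm2⟩
    · have hlu := hL₁ _ hu
      have : c = [] := by
        have := congrArg List.length hc1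
        simp only [List.length_append] at this
        exact List.eq_nil_of_length_eq_zero (by omega)
      subst this
      simp only [List.append_nil] at hc1
      simp only [List.nil_append] at hc2
      subst hc1
      exact ⟨[], by simpa using hu, x, hx, by rw [hc2]; simp⟩
  · rintro ⟨m, hm, x, hx, rfl⟩
    exact ⟨w ++ m, hm, x, hx, by simp⟩

/-- For `u ∈ L₁` of full length and any `x`, the quotient of the concatenation is a
quotient of `L₂`. -/
lemma lquot_concat_of_full (hL₁ : ∀ w ∈ L₁, w.length = ℓ₁) {u : List α} (hu : u ∈ L₁)
    (x : List α) : lquot (concatLang L₁ L₂) (u ++ x) = lquot L₂ x := by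
  rw [lquot_append, lquot_concat_of_le hL₁ (le_of_eq (hL₁ _ hu)),
    lquot_of_mem hL₁ hu, concat_singleton_nil]

lemma concat_right_inj (hL₂ : ∀ w ∈ L₂, w.length = ℓ₂) (hne₂ : L₂.Nonempty)
    {K K' : Set (List α)} (h : concatLang K L₂ = concatLang K' L₂) : K = K' := by
  obtain ⟨y, hy⟩ := hne₂
  have key : ∀ S S' : Set (List α), concatLang S L₂ = concatLang S' L₂ → S ⊆ S' := by
    intro S S' hSS m hm
    have : m ++ y ∈ concatLang S' L₂ := by
      rw [← hSS]; exact ⟨m, hm, y, hy, rfl⟩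
    obtain ⟨m', hm', y', hy', heq⟩ := this
    have hlen : y.length = y'.length := by rw [hL₂ _ hy, hL₂ _ hy']
    obtain ⟨rfl, -⟩ := List.append_inj' heq hlen
    exact hm'
  exact le_antisymm (key _ _ h) (key _ _ h.symm)

lemma quots_concat (hl₁ : 0 < ℓ₁) (hl₂ : 0 < ℓ₂)
    (hL₁ : ∀ w ∈ L₁, w.length = ℓ₁) (hL₂ : ∀ w ∈ L₂, w.length = ℓ₂)
    (hne₁ : L₁.Nonempty) (hne₂ : L₂.Nonempty) :
    Quots (concatLang L₁ L₂) =
      ((fun K => concatLang K L₂) '' Quots L₁) ∪ (Quots L₂ \ {L₂, ∅}) := by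
  have hnea : Nonempty α := by
    obtain ⟨u, hu⟩ := hne₁
    have := hL₁ _ hu
    cases u with
    | nil => simp at this; omega
    | cons a _ => exact ⟨a⟩
  have hP : ∀ w ∈ concatLang L₁ L₂, w.length = ℓ₁ + ℓ₂ := concat_length hL₁ hL₂
  have hemptyA : (∅ : Set (List α)) ∈ (fun K => concatLang K L₂) '' Quots L₁ :=
    ⟨∅, empty_mem_quots hL₁, by simp⟩
  apply Set.eq_of_subset_of_subset
  · rintro _ ⟨w, rfl⟩
    by_cases hw : w.length ≤ ℓ₁
    · exact Or.inl ⟨lquot L₁ w, ⟨w, rfl⟩, (lquot_concat_of_le hL₁ hw).symm⟩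
    · push_neg at hw
      have hw' : w = w.take ℓ₁ ++ w.drop ℓ₁ := (List.take_append_drop ℓ₁ w).symm
      have hlt : (w.take ℓ₁).length = ℓ₁ := by
        rw [List.length_take]; omega
      have hld : 0 < (w.drop ℓ₁).length := by
        rw [List.length_drop]; omega
      by_cases hu : w.take ℓ₁ ∈ L₁
      · rw [hw', lquot_concat_of_full hL₁ hu]
        by_cases hx : lquot L₂ (w.drop ℓ₁) = ∅
        · rw [hx]; exact Or.inl hemptyA
        · refine Or.inr ⟨⟨w.drop ℓ₁, rfl⟩, ?_⟩
          simp only [Set.mem_insert_iff, Set.mem_singleton_iff, not_or]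
          refine ⟨?_, hx⟩
          intro hEq
          obtain ⟨v, hv⟩ := Set.nonempty_iff_ne_empty.2 hx
          have h1 := hL₂ _ (mem_lquot.1 hv)
          have h2 : v ∈ L₂ := hEq ▸ hv
          have h3 := hL₂ _ h2
          simp only [List.length_append] at h1
          omega
      · rw [hw', lquot_append, lquot_concat_of_le hL₁ (le_of_eq hlt),
          lquot_of_not_mem hL₁ hlt hu, concat_empty_left, lquot_empty]
        exact Or.inl hemptyA
  · rintro S (⟨K, ⟨w, rfl⟩, rfl⟩ | ⟨⟨x, rfl⟩, hS⟩)
    · show concatLang (lquot L₁ w) L₂ ∈ Quots (concatLang L₁ L₂)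
      rcases Set.eq_empty_or_nonempty (lquot L₁ w) with hK | ⟨m, hm⟩
      · rw [hK, concat_empty_left]
        exact empty_mem_quots hP
      · have hwle : w.length ≤ ℓ₁ := by
          have := hL₁ _ (mem_lquot.1 hm)
          simp only [List.length_append] at this
          omega
        exact ⟨w, lquot_concat_of_le hL₁ hwle⟩
    · simp only [Set.mem_insert_iff, Set.mem_singleton_iff, not_or] at hS
      obtain ⟨u, hu⟩ := hne₁
      exact ⟨u ++ x, lquot_concat_of_full hL₁ hu x⟩

end Comb

end Stmt16

theorem stmt16 {α : Type} [Fintype α] (k ℓ₁ ℓ₂ : ℕ) (hcard : Fintype.card α = k)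
    (hl₁ : 0 < ℓ₁) (hl₂ : 0 < ℓ₂)
    (L₁ L₂ : Set (List α))
    (hL₁ : ∀ w ∈ L₁, w.length = ℓ₁) (hL₂ : ∀ w ∈ L₂, w.length = ℓ₂)
    (hne₁ : L₁.Nonempty) (hne₂ : L₂.Nonempty) :
    dsc (concatLang L₁ L₂) = dsc L₁ + dsc L₂ - 2 := by
  classical
  open Stmt16 in
  have hnea : Nonempty α := by
    obtain ⟨u, hu⟩ := hne₁
    have := hL₁ u hu
    cases u with
    | nil => simp at this; omega
    | cons a _ => exact ⟨a⟩
  have hP : ∀ w ∈ concatLang L₁ L₂, w.length = ℓ₁ + ℓ₂ := concat_length hL₁ hL₂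
  rw [dsc_eq_card hP, dsc_eq_card hL₁, dsc_eq_card hL₂]
  have hfin₁ : (Quots L₁).Finite := quots_finite hL₁
  have hfin₂ : (Quots L₂).Finite := quots_finite hL₂
  rw [quots_concat hl₁ hl₂ hL₁ hL₂ hne₁ hne₂]
  -- disjointness
  have hdisj : Disjoint ((fun K => concatLang K L₂) '' Quots L₁) (Quots L₂ \ {L₂, ∅}) := by
    rw [Set.disjoint_left]
    rintro S ⟨K, hK, hKS⟩ ⟨⟨x, hx⟩, hS⟩
    have hKS : concatLang K L₂ = S := hKS
    subst hKS
    simp only [Set.mem_insert_iff, Set.mem_singleton_iff, not_or] at hS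
    obtain ⟨hSL₂, hSne⟩ := hS
    obtain ⟨v, hv⟩ := Set.nonempty_iff_ne_empty.2 hSne
    have hxne : x ≠ [] := by
      rintro rfl
      exact hSL₂ (by rw [← hx]; rfl)
    have hv2 : v ∈ lquot L₂ x := by rw [hx]; exact hv
    have h1 := hL₂ _ (mem_lquot.1 hv2)
    simp only [List.length_append] at h1
    have hxlen : 0 < x.length := List.length_pos_iff.2 hxne
    obtain ⟨m, hm, y, hy, rfl⟩ := hv
    have h2 := hL₂ _ hy
    simp only [List.length_append] at h1
    omega
  have hinj : Set.InjOn (fun K => concatLang K L₂) (Quots L₁) :=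
    fun K _ K' _ h => concat_right_inj hL₂ hne₂ h
  have hpairsub : ({L₂, ∅} : Set (Set (List α))) ⊆ Quots L₂ := by
    rintro S (rfl | rfl)
    · exact ⟨[], rfl⟩
    · exact empty_mem_quots hL₂
  have hpairne : L₂ ≠ (∅ : Set (List α)) := Set.nonempty_iff_ne_empty.1 hne₂
  rw [Set.ncard_union_eq hdisj (hfin₁.image _) hfin₂.diff,
    Set.ncard_image_of_injOn hinj,
    Set.ncard_diff hpairsub ((Set.finite_singleton _).insert _),
    Set.ncard_pair hpairne]
  have h2le : 2 ≤ (Quots L₂).ncard := by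
    have := Set.ncard_le_ncard hpairsub hfin₂
    rwa [Set.ncard_pair hpairne] at this
  omega
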